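/- Let f(t) = A e^{j(at + bt²/2)} be a linear chirp with A > 0 and a, b ∈ ℝ. Then the chirplet transform of f with the chirp-modulated Gaussian window, with CR parameter β and variance σ, equals f(t) · √(√(2π)σ/(1 + jσ²(β − b))) · exp(−σ²(ω − a − bt)²/(2(1 + jσ²(β − b)))). -/

import Mathlib

open MeasureTheory Complex

set_option maxHeartbeats 1000000 in
lemma mul_cpow_half_aux (r : ℝ) (hr : 0 < r) (z : ℂ) (hz : z ≠ 0) :
    ((r : ℂ) * z) ^ ((1:ℂ)/2) = (r : ℂ) ^ ((1:ℂ)/2) * z ^ ((1:ℂ)/2) := by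
  have hr' : (r : ℂ) ≠ 0 := by exact_mod_cast hr.ne'
  rw [Complex.cpow_def_of_ne_zero (mul_ne_zero hr' hz),
      Complex.cpow_def_of_ne_zero hr', Complex.cpow_def_of_ne_zero hz,
      Complex.log_ofReal_mul hr hz, ← Complex.ofReal_log hr.le, add_mul, Complex.exp_add]

set_option maxHeartbeats 1000000 in
/-- Closed form of the chirplet transform of a linear chirp
`f(t) = A e^{i(at + bt²/2)}` with chirp-modulated Gaussian window:
`C_f(t,ω) = f(t) √(√(2π)σ/(1 + iσ²(β−b))) exp(−σ²(ω−a−bt)²/(2(1 + iσ²(β−b))))`. -/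
theorem chirplet_of_linear_chirp (A a b σ β : ℝ) (hA : 0 < A) (hσ : 0 < σ)
    (f : ℝ → ℂ)
    (hf : ∀ x : ℝ, f x = (A : ℂ) * Complex.exp (Complex.I * (a * x + b * x ^ 2 / 2))) :
    ∀ t ω : ℝ,
      ((1 / Real.sqrt (Real.sqrt (2 * Real.pi) * σ) : ℝ) : ℂ) *
        (∫ μ : ℝ, f μ * Complex.exp (-((t : ℂ) - μ) ^ 2 / (2 * (σ : ℂ) ^ 2)) *
          Complex.exp (-Complex.I * β * ((μ : ℂ) - t) ^ 2 / 2) *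
          Complex.exp (-Complex.I * ω * ((μ : ℂ) - t))) =
      f t * ((Real.sqrt (2 * Real.pi) * σ : ℂ) /
          (1 + Complex.I * σ ^ 2 * (β - b))) ^ ((1 : ℂ) / 2) *
        Complex.exp (-(σ : ℂ) ^ 2 * ((ω : ℂ) - a - b * t) ^ 2 /
          (2 * (1 + Complex.I * σ ^ 2 * (β - b)))) := by
  intro t ω
  have hσC : (σ : ℂ) ≠ 0 := by exact_mod_cast hσ.ne'
  have hσ2 : ((σ:ℂ))^2 ≠ 0 := pow_ne_zero 2 hσC
  set D : ℂ := 1 + Complex.I * σ ^ 2 * (β - b) with hD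
  have hDform : D = ((1 : ℝ) : ℂ) + ((σ ^ 2 * (β - b) : ℝ) : ℂ) * Complex.I := by
    rw [hD]; push_cast; ring
  have hD0 : D ≠ 0 := by
    rw [hDform]
    intro h
    have h' := congrArg Complex.re h
    simp only [Complex.add_re, Complex.ofReal_re, Complex.mul_re, Complex.I_re, Complex.I_im,
      Complex.ofReal_im, Complex.zero_re, mul_zero, mul_one, zero_mul, sub_zero, zero_sub,
      zero_mul] at h'
    norm_num at h'
  -- quadratic coefficients
  set p : ℂ := Complex.I * b / 2 - 1 / (2 * σ ^ 2) - Complex.I * β / 2 with hp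
  set q : ℂ := Complex.I * a + t / σ ^ 2 + Complex.I * β * t - Complex.I * ω with hq
  set r : ℂ := -t ^ 2 / (2 * σ ^ 2) - Complex.I * β * t ^ 2 / 2 + Complex.I * ω * t with hr
  have hpform : p = ((-(1 / (2 * σ ^ 2)) : ℝ) : ℂ) + (((b - β) / 2 : ℝ) : ℂ) * Complex.I := by
    rw [hp]; push_cast; field_simp [hσ2]; ring
  have hpre : p.re < 0 := by
    rw [hpform]
    have h1 : (0:ℝ) < 1 / (2 * σ ^ 2) := by positivity
    simp only [Complex.add_re, Complex.ofReal_re, Complex.mul_re, Complex.I_re, Complex.I_im,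
      Complex.ofReal_im, mul_zero, mul_one, zero_mul, sub_zero, zero_sub, add_zero, sub_self,
      neg_zero]
    linarith
  have hp0 : p ≠ 0 := fun h => by rw [h] at hpre; simp at hpre
  -- rewrite the integrand
  have hint : ∀ μ : ℝ, f μ * Complex.exp (-((t : ℂ) - μ) ^ 2 / (2 * (σ : ℂ) ^ 2)) *
          Complex.exp (-Complex.I * β * ((μ : ℂ) - t) ^ 2 / 2) *
          Complex.exp (-Complex.I * ω * ((μ : ℂ) - t)) =
      (A : ℂ) * Complex.exp (p * μ ^ 2 + q * μ + r) := by
    intro μ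
    rw [hf μ, mul_assoc, mul_assoc, mul_assoc, ← Complex.exp_add, ← Complex.exp_add,
        ← Complex.exp_add]
    congr 1
    rw [hp, hq, hr]
    ring
  rw [MeasureTheory.integral_congr_ae (Filter.Eventually.of_forall hint),
      MeasureTheory.integral_const_mul, integral_cexp_quadratic hpre q r]
  -- the power factor
  have hnegp : -p = D / (2 * σ ^ 2) := by
    rw [hp, hD]; field_simp [hσ2]; ring
  set s : ℝ := Real.sqrt (2 * Real.pi) * σ with hs
  have hs0 : 0 < s := by
    rw [hs]; positivity
  have hssq : (s : ℂ) ^ 2 = (Real.pi : ℂ) * (2 * σ ^ 2) := by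
    rw [hs]; push_cast
    rw [mul_pow, ← Complex.ofReal_pow, Real.sq_sqrt (by positivity : (0:ℝ) ≤ 2 * Real.pi)]
    push_cast; ring
  have hpi : (Real.pi : ℂ) / (-p) = (s : ℂ) * ((s : ℂ) / D) := by
    rw [hnegp, div_div_eq_mul_div, ← hssq, sq, mul_div_assoc]
  have hsD0 : (s : ℂ) / D ≠ 0 := div_ne_zero (by exact_mod_cast hs0.ne') hD0
  rw [hpi, mul_cpow_half_aux s hs0 _ hsD0]
  have hshalf : (s : ℂ) ^ ((1:ℂ)/2) = ((Real.sqrt s : ℝ) : ℂ) := by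
    rw [show ((1:ℂ)/2) = (((1:ℝ)/2 : ℝ) : ℂ) by norm_num, ← Complex.ofReal_cpow hs0.le]
    norm_num [Real.sqrt_eq_rpow]
  -- split the exponential
  set R : ℂ := -(t:ℂ)^2 - Complex.I * σ^2 * β * t^2 + 2 * Complex.I * σ^2 * ω * t with hR
  set Q : ℂ := Complex.I * σ^2 * a + t + Complex.I * σ^2 * β * t - Complex.I * σ^2 * ω with hQ
  have key : R * D + Q ^ 2 =
      2 * (σ:ℂ)^2 * D * (Complex.I * ((a:ℂ) * t + b * t ^ 2 / 2))
        - (σ:ℂ)^4 * ((ω : ℂ) - a - b * t) ^ 2 := by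
    rw [hD, hR, hQ]
    linear_combination ((σ:ℂ)^2 * ((ω:ℂ) - a - b * t))^2 * Complex.I_sq
  have h2σD : (2:ℂ) * (σ:ℂ)^2 * D ≠ 0 := mul_ne_zero (mul_ne_zero two_ne_zero hσ2) hD0
  have e1 : r - q ^ 2 / (4 * p) = (R * D + Q ^ 2) / (2 * (σ:ℂ)^2 * D) := by
    have hp4 : (4 : ℂ) * p = (-2) * D / σ^2 := by
      rw [hp, hD]; field_simp [hσ2]; ring
    rw [hp4, div_div_eq_mul_div, hR, hQ, hq, hr]
    field_simp
    rw [hD]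
    ring
  have e2 : Complex.I * ((a:ℂ) * t + b * t ^ 2 / 2) +
        (-(σ : ℂ) ^ 2 * ((ω : ℂ) - a - b * t) ^ 2 / (2 * D)) =
      (2 * (σ:ℂ)^2 * D * (Complex.I * ((a:ℂ) * t + b * t ^ 2 / 2))
        - (σ:ℂ)^4 * ((ω : ℂ) - a - b * t) ^ 2) / (2 * (σ:ℂ)^2 * D) := by
    field_simp
    ring
  have hexp : r - q ^ 2 / (4 * p) =
      Complex.I * ((a:ℂ) * t + b * t ^ 2 / 2) +
        (-(σ : ℂ) ^ 2 * ((ω : ℂ) - a - b * t) ^ 2 / (2 * D)) := by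
    rw [e1, e2, key]
  rw [hexp, Complex.exp_add, hf t, hshalf]
  have hscast : ((s : ℝ) : ℂ) = ((Real.sqrt (2 * Real.pi) : ℝ) : ℂ) * ((σ : ℝ) : ℂ) := by
    rw [hs]; push_cast; ring
  rw [hscast]
  have hsqrt_ne : ((Real.sqrt s : ℝ) : ℂ) ≠ 0 := by
    exact_mod_cast (Real.sqrt_pos.mpr hs0).ne'
  push_cast
  field_simp
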